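/- In a residuated lattice, if C is a ∨-closed subset (closed under joins) disjoint from an α-filter F, then F is contained in an α-filter P maximal with respect to being disjoint from C, and any such maximal P is a prime filter. -/
import Mathlib

/-- A (bounded, integral, commutative) residuated lattice. -/
class ResLattice (A : Type*) extends Lattice A, CommMonoid A, OrderBot A where
  himp : A → A → A
  adjunction : ∀ x y z : A, x * y ≤ z ↔ x ≤ himp y z
  le_one : ∀ x : A, x ≤ 1

variable {A : Type*} [ResLattice A]

/-- Coannihilator of a subset: `X^⊥ = {a | a ⊔ x = 1 for all x ∈ X}`. -/
def Coann (X : Set A) : Set A := {a | ∀ x ∈ X, a ⊔ x = 1}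

/-- Coannulet of an element: `x^⊥`. -/
def rperp (x : A) : Set A := Coann {x}

/-- The principal filter generated by `x`. -/
def PFil (x : A) : Set A := {a | ∃ n : ℕ, 0 < n ∧ x ^ n ≤ a}

/-- Filters of a residuated lattice. -/
def IsRLFilter (F : Set A) : Prop :=
  F.Nonempty ∧ (∀ x ∈ F, ∀ y ∈ F, x * y ∈ F) ∧ (∀ x ∈ F, ∀ y : A, x ⊔ y ∈ F)

/-- Prime filters. -/
def IsRLPrime (P : Set A) : Prop :=
  IsRLFilter P ∧ P ≠ Set.univ ∧ ∀ x y : A, x ⊔ y ∈ P → x ∈ P ∨ y ∈ P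

/-- Minimal prime filters. -/
def IsRLMinPrime (P : Set A) : Prop :=
  IsRLPrime P ∧ ∀ Q : Set A, IsRLPrime Q → Q ⊆ P → Q = P

/-- Quasicomplemented residuated lattice. -/
def Quasicomplemented (A : Type*) [ResLattice A] : Prop :=
  ∀ x : A, ∃ y : A, Coann (rperp x) = rperp y

/-- α-filters. -/
def IsAlphaFilter (F : Set A) : Prop :=
  IsRLFilter F ∧ ∀ x ∈ F, Coann (rperp x) ⊆ F

/-- The α-filter generated by a subset. -/
def alphaGen (X : Set A) : Set A := ⋂₀ {G : Set A | IsAlphaFilter G ∧ X ⊆ G}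

/- ### auxiliary lemmas -/

lemma rl_le_one (x : A) : x ≤ 1 := ResLattice.le_one x

lemma rl_eq_one_iff {x : A} : x = 1 ↔ 1 ≤ x :=
  ⟨fun h => h ▸ le_rfl, fun h => le_antisymm (rl_le_one x) h⟩

lemma rl_mul_le_mul_right {a b : A} (h : a ≤ b) (c : A) : a * c ≤ b * c := by
  rw [ResLattice.adjunction]
  exact h.trans ((ResLattice.adjunction b c (b * c)).mp le_rfl)

lemma rl_mul_le_left (x y : A) : x * y ≤ x := by
  have := rl_mul_le_mul_right (rl_le_one y) x
  rwa [one_mul, mul_comm] at this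

lemma rl_mul_le_right (x y : A) : x * y ≤ y := by
  rw [mul_comm]; exact rl_mul_le_left y x

lemma rl_mul_le_mul {a b c d : A} (h1 : a ≤ b) (h2 : c ≤ d) : a * c ≤ b * d := by
  refine (rl_mul_le_mul_right h1 c).trans ?_
  rw [mul_comm b c, mul_comm b d]; exact rl_mul_le_mul_right h2 b

lemma rl_mul_sup (x y z : A) : x * (y ⊔ z) = x * y ⊔ x * z := by
  apply le_antisymm
  · rw [mul_comm, ResLattice.adjunction]
    apply sup_le
    · exact (ResLattice.adjunction y x _).mp (by rw [mul_comm]; exact le_sup_left)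
    · exact (ResLattice.adjunction z x _).mp (by rw [mul_comm]; exact le_sup_right)
  · exact sup_le (rl_mul_le_mul le_rfl le_sup_left) (rl_mul_le_mul le_rfl le_sup_right)

lemma rl_key {a x y : A} (hx : a ⊔ x = 1) (hy : a ⊔ y = 1) : a ⊔ x * y = 1 := by
  apply rl_eq_one_iff.mpr
  have h1 : (1:A) = (a ⊔ x) * (a ⊔ y) := by rw [hx, hy, one_mul]
  rw [h1, rl_mul_sup]
  apply sup_le
  · exact (rl_mul_le_right _ _).trans le_sup_left
  · rw [mul_comm, rl_mul_sup]
    exact sup_le ((rl_mul_le_right _ _).trans le_sup_left)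
      (le_sup_right.trans_eq (by rw [mul_comm]))

lemma mem_rperp {a x : A} : a ∈ rperp x ↔ a ⊔ x = 1 := by
  simp [rperp, Coann]

lemma mem_dperp {a u : A} : a ∈ Coann (rperp u) ↔ ∀ b, b ⊔ u = 1 → a ⊔ b = 1 := by
  simp [Coann, mem_rperp]

lemma self_mem_dperp (x : A) : x ∈ Coann (rperp x) := by
  rw [mem_dperp]; intro b hb; rw [sup_comm]; exact hb

lemma dperp_up {a b u : A} (ha : a ∈ Coann (rperp u)) (hab : a ≤ b) :
    b ∈ Coann (rperp u) := by
  rw [mem_dperp] at ha ⊢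
  intro c hc
  exact rl_eq_one_iff.mpr ((ha c hc).ge.trans (sup_le_sup_right hab c))

lemma dperp_anti {u v : A} (h : u ≤ v) : Coann (rperp v) ⊆ Coann (rperp u) := by
  intro a ha
  rw [mem_dperp] at ha ⊢
  intro b hb
  exact ha b (rl_eq_one_iff.mpr (hb.ge.trans (sup_le_sup_left h b)))

lemma dperp_mul {a b u v : A} (ha : a ∈ Coann (rperp u)) (hb : b ∈ Coann (rperp v)) :
    a * b ∈ Coann (rperp (u * v)) := by
  rw [mem_dperp] at ha hb ⊢
  intro c hc
  have hcu : c ⊔ u = 1 := rl_eq_one_iff.mpr (hc.ge.trans (sup_le_sup_left (rl_mul_le_left u v) c))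
  have hcv : c ⊔ v = 1 := rl_eq_one_iff.mpr (hc.ge.trans (sup_le_sup_left (rl_mul_le_right u v) c))
  have h1 : c ⊔ a = 1 := by rw [sup_comm]; exact ha c hcu
  have h2 : c ⊔ b = 1 := by rw [sup_comm]; exact hb c hcv
  rw [sup_comm]; exact rl_key h1 h2

lemma dperp_sup {a b u v : A} (ha : a ∈ Coann (rperp u)) (hb : b ∈ Coann (rperp v)) :
    a ⊔ b ∈ Coann (rperp (u ⊔ v)) := by
  rw [mem_dperp] at ha hb ⊢
  intro c hc
  have h1 : a ⊔ (c ⊔ v) = 1 := ha _ (by rw [sup_assoc, sup_comm v u]; exact hc)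
  have h2 : b ⊔ (a ⊔ c) = 1 := hb _ (by rw [sup_assoc]; exact h1)
  rw [sup_comm a b, sup_assoc]
  exact h2

lemma dperp_dperp {a u : A} (ha : a ∈ Coann (rperp u)) :
    Coann (rperp a) ⊆ Coann (rperp u) := by
  intro b hb
  rw [mem_dperp] at ha hb ⊢
  intro c hc
  exact hb c (by rw [sup_comm]; exact ha c hc)

lemma rl_pow_le_one (x : A) (n : ℕ) : x ^ n ≤ 1 := rl_le_one _

lemma rl_pow_le_pow {x : A} {n m : ℕ} (h : n ≤ m) : x ^ m ≤ x ^ n := by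
  obtain ⟨k, rfl⟩ := Nat.exists_eq_add_of_le h
  rw [pow_add]; exact rl_mul_le_left _ _

lemma rl_sup_pow (x y : A) : ∀ n m : ℕ, (x ⊔ y) ^ (n + m) ≤ x ^ n ⊔ y ^ m := by
  intro n
  induction n with
  | zero =>
    intro m
    simpa using (rl_pow_le_one (x ⊔ y) m).trans le_sup_left
  | succ n ih =>
    intro m
    induction m with
    | zero => simpa using (rl_pow_le_one (x ⊔ y) (n+1)).trans le_sup_right
    | succ m ihm =>
      have key : (x ⊔ y) ^ (n + 1 + (m + 1)) = (x ⊔ y) ^ (n + 1 + m) * (x ⊔ y) :=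
        pow_succ (x ⊔ y) (n + 1 + m)
      rw [key, rl_mul_sup]
      apply sup_le
      · have h1 : (x ⊔ y) ^ (n + 1 + m) * x ≤ (x ^ n ⊔ y ^ (m+1)) * x := by
          apply rl_mul_le_mul_right
          have : n + 1 + m = n + (m + 1) := by omega
          rw [this]; exact ih (m+1)
        refine h1.trans ?_
        rw [mul_comm, rl_mul_sup]
        apply sup_le
        · rw [mul_comm, ← pow_succ]; exact le_sup_left
        · exact (rl_mul_le_right _ _).trans le_sup_right
      · have h1 : (x ⊔ y) ^ (n + 1 + m) * y ≤ (x ^ (n+1) ⊔ y ^ m) * y :=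
          rl_mul_le_mul_right ihm y
        refine h1.trans ?_
        rw [mul_comm, rl_mul_sup]
        apply sup_le
        · exact (rl_mul_le_right _ _).trans le_sup_left
        · rw [mul_comm, ← pow_succ]; exact le_sup_right

lemma rl_filter_up {F : Set A} (hF : IsRLFilter F) {x y : A} (hx : x ∈ F) (h : x ≤ y) :
    y ∈ F := by
  have := hF.2.2 x hx y
  rwa [sup_eq_right.mpr h] at this

lemma rl_filter_pow {F : Set A} (hF : IsRLFilter F) {x : A} (hx : x ∈ F) :
    ∀ n : ℕ, 0 < n → x ^ n ∈ F := by
  intro n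
  induction n with
  | zero => omega
  | succ n ih =>
    intro _
    rcases Nat.eq_zero_or_pos n with h | h
    · subst h; simpa using hx
    · rw [pow_succ]; exact hF.2.1 _ (ih h) _ hx

/-- The α-filter generated by `P ∪ {x}`, explicitly. -/
def Gset (P : Set A) (x : A) : Set A :=
  {a | ∃ f ∈ P, ∃ n : ℕ, 0 < n ∧ a ∈ Coann (rperp (f * x ^ n))}

lemma Gset_superset {P : Set A} (x : A) : P ⊆ Gset P x := by
  intro f hf
  exact ⟨f, hf, 1, one_pos, dperp_anti (rl_mul_le_left f (x ^ 1)) (self_mem_dperp f)⟩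

lemma Gset_mem {P : Set A} (hP : P.Nonempty) (x : A) : x ∈ Gset P x := by
  obtain ⟨f, hf⟩ := hP
  refine ⟨f, hf, 1, one_pos, dperp_anti ?_ (self_mem_dperp x)⟩
  rw [pow_one]; exact rl_mul_le_right f x

lemma Gset_alpha {P : Set A} (hP : IsAlphaFilter P) (x : A) : IsAlphaFilter (Gset P x) := by
  obtain ⟨⟨hne, hmul, hsup⟩, _⟩ := hP
  refine ⟨⟨hne.mono (Gset_superset x), ?_, ?_⟩, ?_⟩
  · rintro a ⟨f1, hf1, n1, hn1, ha⟩ b ⟨f2, hf2, n2, hn2, hb⟩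
    refine ⟨f1 * f2, hmul _ hf1 _ hf2, n1 + n2, by omega, ?_⟩
    have h : (f1 * x ^ n1) * (f2 * x ^ n2) = f1 * f2 * x ^ (n1 + n2) := by
      rw [mul_mul_mul_comm, pow_add]
    rw [← h]
    exact dperp_mul ha hb
  · rintro a ⟨f, hf, n, hn, ha⟩ y
    exact ⟨f, hf, n, hn, dperp_up ha le_sup_left⟩
  · rintro a ⟨f, hf, n, hn, ha⟩
    intro b hb
    exact ⟨f, hf, n, hn, dperp_dperp ha hb⟩

theorem stmt13 (C F : Set A) (hC : C.Nonempty)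
    (hCc : ∀ x ∈ C, ∀ y ∈ C, x ⊔ y ∈ C)
    (hF : IsAlphaFilter F) (hdisj : F ∩ C = ∅) :
    (∃ P : Set A, IsAlphaFilter P ∧ F ⊆ P ∧ P ∩ C = ∅ ∧
      ∀ Q : Set A, IsAlphaFilter Q → P ⊆ Q → Q ∩ C = ∅ → Q = P) ∧
    (∀ P : Set A, IsAlphaFilter P → F ⊆ P → P ∩ C = ∅ →
      (∀ Q : Set A, IsAlphaFilter Q → P ⊆ Q → Q ∩ C = ∅ → Q = P) →
      IsRLPrime P) := by
  constructor
  · -- Existence via Zorn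
    set S : Set (Set A) := {G | IsAlphaFilter G ∧ F ⊆ G ∧ G ∩ C = ∅} with hS
    have hFS : F ∈ S := ⟨hF, subset_rfl, hdisj⟩
    have hchainS : ∀ c ⊆ S, IsChain (· ⊆ ·) c → c.Nonempty →
        ∃ ub ∈ S, ∀ s ∈ c, s ⊆ ub := by
      intro c hcS hchain hcne
      refine ⟨⋃₀ c, ⟨⟨⟨?_, ?_, ?_⟩, ?_⟩, ?_, ?_⟩, fun s hs => Set.subset_sUnion_of_mem hs⟩
      · obtain ⟨G, hG⟩ := hcne
        obtain ⟨g, hg⟩ := (hcS hG).1.1.1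
        exact ⟨g, G, hG, hg⟩
      · rintro a ⟨G1, hG1, ha⟩ b ⟨G2, hG2, hb⟩
        rcases hchain.total hG1 hG2 with h | h
        · exact ⟨G2, hG2, (hcS hG2).1.1.2.1 a (h ha) b hb⟩
        · exact ⟨G1, hG1, (hcS hG1).1.1.2.1 a ha b (h hb)⟩
      · rintro a ⟨G, hG, ha⟩ y
        exact ⟨G, hG, (hcS hG).1.1.2.2 a ha y⟩
      · rintro a ⟨G, hG, ha⟩
        exact fun b hb => ⟨G, hG, (hcS hG).1.2 a ha hb⟩
      · obtain ⟨G, hG⟩ := hcne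
        exact (hcS hG).2.1.trans (Set.subset_sUnion_of_mem hG)
      · rw [Set.eq_empty_iff_forall_notMem]
        rintro a ⟨⟨G, hG, haG⟩, haC⟩
        rw [Set.eq_empty_iff_forall_notMem] at hdisj
        have := (hcS hG).2.2
        rw [Set.eq_empty_iff_forall_notMem] at this
        exact this a ⟨haG, haC⟩
    obtain ⟨P, hFP, hPS, hPmax⟩ := zorn_subset_nonempty S hchainS F hFS
    refine ⟨P, hPS.1, hPS.2.1, hPS.2.2, ?_⟩
    intro Q hQ hPQ hQC
    exact le_antisymm (hPmax ⟨hQ, hPS.2.1.trans hPQ, hQC⟩ hPQ) hPQ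
  · -- Maximal disjoint α-filters are prime
    intro P hP hFP hPC hPmax
    refine ⟨hP.1, ?_, ?_⟩
    · intro h
      obtain ⟨c, hc⟩ := hC
      rw [Set.eq_empty_iff_forall_notMem] at hPC
      exact hPC c ⟨h ▸ Set.mem_univ c, hc⟩
    · intro x y hxy
      by_contra hcon
      push_neg at hcon
      obtain ⟨hx, hy⟩ := hcon
      -- The extension by x must meet C
      have hmeet : ∀ z : A, z ∉ P → ∃ c ∈ C, c ∈ Gset P z := by
        intro z hz
        by_contra h
        push_neg at h
        have hempty : Gset P z ∩ C = ∅ := by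
          rw [Set.eq_empty_iff_forall_notMem]
          rintro a ⟨haG, haC⟩
          exact h a haC haG
        have := hPmax (Gset P z) (Gset_alpha hP z) (Gset_superset z) hempty
        exact hz (this ▸ Gset_mem hP.1.1 z)
      obtain ⟨c1, hc1C, f1, hf1, n, hn, hc1⟩ := hmeet x hx
      obtain ⟨c2, hc2C, f2, hf2, m, hm, hc2⟩ := hmeet y hy
      -- lift both to common data
      set f := f1 * f2 with hf
      set N := n + m with hN
      have hc1' : c1 ∈ Coann (rperp (f * x ^ N)) :=
        dperp_anti (rl_mul_le_mul (rl_mul_le_left f1 f2) (rl_pow_le_pow (by omega))) hc1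
      have hc2' : c2 ∈ Coann (rperp (f * y ^ N)) :=
        dperp_anti (rl_mul_le_mul (rl_mul_le_right f1 f2) (rl_pow_le_pow (by omega))) hc2
      have hsup : c1 ⊔ c2 ∈ Coann (rperp (f * x ^ N ⊔ f * y ^ N)) := dperp_sup hc1' hc2'
      have hz : f * (x ⊔ y) ^ (N + N) ≤ f * x ^ N ⊔ f * y ^ N := by
        rw [← rl_mul_sup]
        exact rl_mul_le_mul le_rfl (rl_sup_pow x y N N)
      have hsup2 : c1 ⊔ c2 ∈ Coann (rperp (f * (x ⊔ y) ^ (N + N))) := dperp_anti hz hsup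
      have hzP : f * (x ⊔ y) ^ (N + N) ∈ P :=
        hP.1.2.1 _ (hP.1.2.1 _ hf1 _ hf2) _ (rl_filter_pow hP.1 hxy (N + N) (by omega))
      have hfinal : c1 ⊔ c2 ∈ P := hP.2 _ hzP hsup2
      rw [Set.eq_empty_iff_forall_notMem] at hPC
      exact hPC (c1 ⊔ c2) ⟨hfinal, hCc c1 hc1C c2 hc2C⟩
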